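/- Let G and H be sub-σ-algebras of a probability space with ψ = ψ(G,H) < 1, where ψ(G,H) = sup{|P(A∩B)/(P(A)P(B)) − 1| : A ∈ G, B ∈ H, P(A)P(B) > 0}. Then for every bounded G-measurable real function g and integrable H-measurable real function h, |E[hg] − E[h]E[g]| ≤ (1−ψ)^{-1} ψ · E[|hg|]. -/

import Mathlib

open MeasureTheory


theorem aux_cov {Ω : Type*} [m0 : MeasurableSpace Ω] (μ : Measure Ω) [IsProbabilityMeasure μ]
    (G : MeasurableSpace Ω) (hG : G ≤ m0) (psi : ℝ)
    (g h : Ω → ℝ) (Mg : ℝ)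
    (hg : Measurable[G] g) (hgb : ∀ ω, |g ω| ≤ Mg)
    (hhi : Integrable h μ)
    (hhg : Integrable (fun ω => h ω * g ω) μ)
    (hb : ∀ᵐ ω ∂μ, |(μ[h | G]) ω - ∫ x, h x ∂μ| ≤ (∫ x, |h x| ∂μ) * psi) :
    |∫ ω, h ω * g ω ∂μ - (∫ ω, h ω ∂μ) * ∫ ω, g ω ∂μ| ≤
      (∫ ω, |h ω| ∂μ) * psi * ∫ ω, |g ω| ∂μ := by
  have hgm : Measurable[m0] g := hg.le hG
  have hgi : Integrable g μ := (integrable_const Mg).mono' hgm.aestronglyMeasurable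
    (Filter.Eventually.of_forall fun ω => by simpa [Real.norm_eq_abs] using hgb ω)
  have hce : Integrable (μ[h | G]) μ := integrable_condExp
  have hgce : Integrable (fun ω => g ω * (μ[h | G]) ω) μ :=
    hce.bdd_mul hgm.aestronglyMeasurable (c := Mg) (Filter.Eventually.of_forall fun ω => by simpa [Real.norm_eq_abs] using hgb ω)
  have hgh : Integrable (fun ω => g ω * h ω) μ := by
    simpa [mul_comm] using hhg
  have hpull : μ[(fun ω => g ω * h ω) | G] =ᵐ[μ] fun ω => g ω * (μ[h | G]) ω :=
    condExp_stronglyMeasurable_mul_of_bound hG hg.stronglyMeasurable hhi Mg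
      (Filter.Eventually.of_forall fun ω => by simpa [Real.norm_eq_abs] using hgb ω)
  set c := ∫ x, h x ∂μ with hc
  have h1 : ∫ ω, h ω * g ω ∂μ = ∫ ω, g ω * (μ[h | G]) ω ∂μ := by
    calc ∫ ω, h ω * g ω ∂μ = ∫ ω, g ω * h ω ∂μ := by simp [mul_comm]
      _ = ∫ ω, (μ[(fun ω => g ω * h ω) | G]) ω ∂μ := (integral_condExp hG).symm
      _ = ∫ ω, g ω * (μ[h | G]) ω ∂μ := integral_congr_ae hpull
  have h2 : c * ∫ ω, g ω ∂μ = ∫ ω, g ω * c ∂μ := by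
    rw [integral_mul_const, mul_comm]
  rw [h1, h2, ← integral_sub hgce (hgi.mul_const c)]
  have hK : Integrable (fun ω => |g ω| * (((∫ x, |h x| ∂μ)) * psi)) μ :=
    hgi.abs.mul_const _
  calc |∫ ω, (g ω * (μ[h | G]) ω - g ω * c) ∂μ|
      ≤ ∫ ω, |g ω * (μ[h | G]) ω - g ω * c| ∂μ := by
        simpa [Real.norm_eq_abs] using
          norm_integral_le_integral_norm (fun ω => g ω * (μ[h | G]) ω - g ω * c)
    _ ≤ ∫ ω, |g ω| * ((∫ x, |h x| ∂μ) * psi) ∂μ := by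
        refine integral_mono_ae ((hgce.sub (hgi.mul_const c)).abs) hK ?_
        filter_upwards [hb] with ω hω
        rw [← mul_sub, abs_mul]
        exact mul_le_mul_of_nonneg_left hω (abs_nonneg _)
    _ = (∫ ω, |h ω| ∂μ) * psi * ∫ ω, |g ω| ∂μ := by
        rw [integral_mul_const, mul_comm]

theorem meas_abs' {Ω : Type*} {m : MeasurableSpace Ω} {f : Ω → ℝ}
    (hf : Measurable[m] f) : Measurable[m] (fun ω => |f ω|) := hf.abs

theorem int_abs' {Ω : Type*} {m : MeasurableSpace Ω} {μ : @MeasureTheory.Measure Ω m} {f : Ω → ℝ}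
    (hf : Integrable f μ) : Integrable (fun ω => |f ω|) μ := hf.abs

/-- ψ-mixing covariance inequality: if `ψ = ψ(G,H) < 1`, then for bounded
`G`-measurable `g` and integrable `H`-measurable `h`,
`|E[hg] − E[h]E[g]| ≤ (1−ψ)⁻¹ ψ E[|hg|]`.  Here
`ψ(G,H) = sup{|P(A∩B)/(P(A)P(B)) − 1| : A ∈ G, B ∈ H, P(A)P(B) > 0}`,
and one may use the standard fact
`‖E[h|G] − E[h]‖_∞ ≤ ‖h‖_{L¹} ψ(G,H)` for integrable `H`-measurable `h`. -/
theorem stmt_2 {Ω : Type*} [m0 : MeasurableSpace Ω] (μ : Measure Ω) [IsProbabilityMeasure μ]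
    (G H : MeasurableSpace Ω) (hG : G ≤ m0) (hH : H ≤ m0)
    (psi : ℝ)
    (hpsidef : psi = sSup {x : ℝ | ∃ A B : Set Ω, MeasurableSet[G] A ∧ MeasurableSet[H] B ∧
        0 < (μ A).toReal * (μ B).toReal ∧
        x = |(μ (A ∩ B)).toReal / ((μ A).toReal * (μ B).toReal) - 1|})
    (hpsi1 : psi < 1)
    (hcond : ∀ h : Ω → ℝ, Measurable[H] h → Integrable h μ →
      ∀ᵐ ω ∂μ, |(μ[h | G]) ω - ∫ x, h x ∂μ| ≤ (∫ x, |h x| ∂μ) * psi)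
    (g h : Ω → ℝ) (Mg : ℝ)
    (hg : Measurable[G] g) (hgb : ∀ ω, |g ω| ≤ Mg)
    (hh : Measurable[H] h) (hhi : Integrable h μ)
    (hhg : Integrable (fun ω => h ω * g ω) μ) :
    |∫ ω, h ω * g ω ∂μ - (∫ ω, h ω ∂μ) * ∫ ω, g ω ∂μ| ≤
      (1 - psi)⁻¹ * psi * ∫ ω, |h ω * g ω| ∂μ := by
  have psinn : 0 ≤ psi := by
    rw [hpsidef]
    apply Real.sSup_nonneg
    rintro x ⟨A, B, -, -, -, rfl⟩
    exact abs_nonneg _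
  have h1p : (0:ℝ) < 1 - psi := by linarith
  set A := ∫ ω, |h ω| ∂μ with hA
  set B := ∫ ω, |g ω| ∂μ with hB
  set I := ∫ ω, |h ω * g ω| ∂μ with hI
  have key1 : |∫ ω, h ω * g ω ∂μ - (∫ ω, h ω ∂μ) * ∫ ω, g ω ∂μ| ≤ A * psi * B :=
    aux_cov (m0 := m0) μ G hG psi g h Mg hg hgb hhi hhg (hcond h hh hhi)
  have habsint : Integrable (fun ω => |h ω| * |g ω|) μ := by
    simpa [abs_mul] using int_abs' hhg
  have hhabs : Integrable (fun ω => |h ω|) μ := int_abs' hhi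
  have hhmeas : Measurable[H] (fun ω => |h ω|) := meas_abs' hh
  have hgmeas : Measurable[G] (fun ω => |g ω|) := meas_abs' hg
  have hb2 := hcond (fun ω => |h ω|) hhmeas hhabs
  have key2 : |∫ ω, |h ω| * |g ω| ∂μ - A * B| ≤ A * psi * B := by
    have := aux_cov (m0 := m0) μ G hG psi (fun ω => |g ω|) (fun ω => |h ω|) Mg hgmeas
      (fun ω => by simpa [abs_abs] using hgb ω) hhabs habsint
      (by simpa [abs_abs] using hb2)
    simpa [abs_abs, hA, hB] using this
  have hIeq : I = ∫ ω, |h ω| * |g ω| ∂μ := by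
    simp [hI, abs_mul]
  have hAnn : 0 ≤ A := integral_nonneg fun ω => abs_nonneg _
  have hBnn : 0 ≤ B := integral_nonneg fun ω => abs_nonneg _
  have hlow : (1 - psi) * (A * B) ≤ I := by
    rw [hIeq]
    have := (abs_le.mp key2).1
    nlinarith
  have hAB : A * B ≤ (1 - psi)⁻¹ * I := by
    have h3 : A * B = (1 - psi)⁻¹ * ((1 - psi) * (A * B)) := by
      field_simp
    rw [h3]
    exact mul_le_mul_of_nonneg_left hlow (by positivity)
  calc |∫ ω, h ω * g ω ∂μ - (∫ ω, h ω ∂μ) * ∫ ω, g ω ∂μ| ≤ A * psi * B := key1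
    _ = psi * (A * B) := by ring
    _ ≤ psi * ((1 - psi)⁻¹ * I) := mul_le_mul_of_nonneg_left hAB psinn
    _ = (1 - psi)⁻¹ * psi * I := by ring
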